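/- arXiv:1807.05501 — 5 statements merged into one kernel-verified Lean document; each statement's English description precedes it below -/
import Mathlib

section
/- Let R be a commutative ring and let f ∈ R[x] be a polynomial of degree one whose leading coefficient is a unit of R. Then every element A of the localization R[x]_f := R[x][f^{-1}] can be written uniquely as a finite sum A = \sum_{i\in\mathbb{Z}} a_i f^i with coefficients a_i ∈ R (all but finitely many equal to zero). -/
open Polynomial LaurentPolynomial

/-- **Unique `f`-power expansion in `R[x][f⁻¹]` for `f` of degree one.**
Let `R` be a commutative ring and `f ∈ R[x]` a polynomial of degree one whose leading
coefficient is a unit of `R`.  Let `u` be the unit of the localization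
`R[x]_f = R[x][f⁻¹]` given by the image of `f`.  Then every element `A` of `R[x]_f`
can be written uniquely as a finite sum `A = ∑ᵢ aᵢ fⁱ` (`i ∈ ℤ`) with coefficients
`aᵢ ∈ R`, all but finitely many equal to zero. -/
theorem unique_f_power_expansion_degree_one
    (R : Type*) [CommRing R] (f : Polynomial R)
    (hdeg : f.degree = 1) (hlead : IsUnit f.leadingCoeff)
    (u : (Localization.Away f)ˣ)
    (hu : (u : Localization.Away f) = algebraMap (Polynomial R) (Localization.Away f) f)
    (A : Localization.Away f) :
    ∃! a : ℤ →₀ R,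
      A = a.sum fun i c =>
        algebraMap R (Localization.Away f) c *
          ((u ^ i : (Localization.Away f)ˣ) : Localization.Away f) := by
  classical
  have hc : f.coeff 1 = f.leadingCoeff := by
    rw [Polynomial.leadingCoeff, Polynomial.natDegree_eq_of_degree_eq_some hdeg]
    norm_num
  haveI : Invertible (f.coeff 1) := by rw [hc]; exact hlead.invertible
  set ψ : Polynomial R ≃ₐ[R] Polynomial R :=
    Polynomial.algEquivCMulXAddC (f.coeff 1) (f.coeff 0) with hψ
  have hψX : ψ X = f := by
    have := (Polynomial.eq_X_add_C_of_degree_le_one (p := f) hdeg.le).symm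
    simpa [hψ, Polynomial.algEquivCMulXAddC] using this
  haveI := LaurentPolynomial.isLocalization (R := R)
  have hmap : (Submonoid.powers (X : Polynomial R)).map ψ.toRingEquiv.toMonoidHom
      = Submonoid.powers f := by
    rw [Submonoid.map_powers]
    exact congrArg Submonoid.powers hψX
  set e : R[T;T⁻¹] ≃+* Localization.Away f :=
    IsLocalization.ringEquivOfRingEquiv (M := Submonoid.powers (X : Polynomial R))
      (T := Submonoid.powers f) R[T;T⁻¹] (Localization.Away f) ψ.toRingEquiv hmap with he
  have hel : ∀ p : Polynomial R,
      e (Polynomial.toLaurent p) = algebraMap (Polynomial R) (Localization.Away f) (ψ p) := by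
    intro p
    have := IsLocalization.ringEquivOfRingEquiv_eq (S := R[T;T⁻¹])
      (Q := Localization.Away f) hmap p
    simpa [he] using this
  have heT1 : e (T 1) = (u : Localization.Away f) := by
    rw [← Polynomial.toLaurent_X, hel, hψX, hu]
  have heTm1 : e (T (-1)) = ((u⁻¹ : (Localization.Away f)ˣ) : Localization.Away f) := by
    have h1 : e (T 1) * e (T (-1)) = 1 := by
      rw [← map_mul, ← T_add]
      norm_num
    calc e (T (-1)) = ↑u⁻¹ * (↑u * e (T (-1))) := by
          rw [← mul_assoc, Units.inv_mul, one_mul]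
      _ = ↑u⁻¹ := by rw [← heT1, h1, mul_one]
  have heC : ∀ r : R, e (LaurentPolynomial.C r) = algebraMap R (Localization.Away f) r := by
    intro r
    rw [show LaurentPolynomial.C r = Polynomial.toLaurent (Polynomial.C r) from
      (Polynomial.toLaurent_C r).symm, hel]
    have : ψ (Polynomial.C r) = Polynomial.C r := by
      simpa using ψ.commutes r
    rw [this]
    exact (IsScalarTower.algebraMap_apply R (Polynomial R) (Localization.Away f) r).symm
  have heT : ∀ n : ℤ,
      e (T n) = ((u ^ n : (Localization.Away f)ˣ) : Localization.Away f) := by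
    intro n
    induction n using Int.induction_on with
    | zero => simp
    | succ n ih =>
        rw [show ((n : ℤ) + 1) = (n : ℤ) + 1 from rfl, T_add, map_mul, ih, heT1,
          zpow_add_one, Units.val_mul]
    | pred n ih =>
        rw [show (-(n : ℤ) - 1) = (-(n : ℤ)) + (-1) by ring, T_add, map_mul, ih, heTm1,
          zpow_add, zpow_neg_one, Units.val_mul]
  have key : ∀ a : ℤ →₀ R,
      (a.sum fun i c => algebraMap R (Localization.Away f) c *
        ((u ^ i : (Localization.Away f)ˣ) : Localization.Away f))
        = e (AddMonoidAlgebra.ofCoeff a) := by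
    intro a
    conv_rhs => rw [show AddMonoidAlgebra.ofCoeff a = a.sum (fun i c => AddMonoidAlgebra.single i c) from
      by rw [← AddMonoidAlgebra.ofCoeff_finsuppSum]; exact congrArg _ (Finsupp.sum_single a).symm]
    rw [map_finsuppSum]
    refine Finsupp.sum_congr ?_
    intro i _
    rw [single_eq_C_mul_T, map_mul, heC, heT]
  refine ⟨(e.symm A).coeff, ?_, ?_⟩
  · show A = Finsupp.sum (e.symm A).coeff fun i c =>
      algebraMap R (Localization.Away f) c *
        ((u ^ i : (Localization.Away f)ˣ) : Localization.Away f)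
    rw [key]
    exact (e.apply_symm_apply A).symm
  · intro b hb
    rw [key] at hb
    have := congrArg e.symm hb
    rw [e.symm_apply_apply] at this
    rw [this]
end

section
/- Let K be a field of characteristic zero and let f ∈ K[x] be a polynomial of degree one with f(0) ≠ 0, so that K[x][f^{-1}] embeds into the formal power series ring K[[x]]. Fix n ≥ 0 and elements A_{lp} ∈ K[x][f^{-1}] for 0 ≤ l ≤ n and p ≥ 0, only finitely many of which are nonzero. Write each A ∈ K[x][f^{-1}] uniquely as A = \sum_{i\in\mathbb{Z}} a_i f^i with a_i ∈ K and let Ord(A) be the largest i with a_i ≠ 0 (Ord(0) = -∞). Assume Ord(A_{l0}) ≤ -2 for all l, and Ord(A_{lp}) ≤ p-1 for all l and all p ≥ 1. Then for any sequence (R_m)_{m≥0} of elements of K[[x]] with R_0 = 1 satisfying, for every m ≥ 1, dR_m/dx = \sum_{l=0}^{n} \sum_{p≥0} A_{lp} · (d/dx)^p R_{m-1-l} (with the convention R_j = 0 for j < 0), every R_m lies in the subring K[x][f^{-1}] of K[[x]]. -/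
open PowerSeries

section AuxAdm

variable {K : Type*} [Field K] [CharZero K] (u : K⟦X⟧ˣ)

private lemma adm_zpow_val (i j : ℤ) :
    ((u ^ (i + j) : K⟦X⟧ˣ) : K⟦X⟧) = ((u ^ i : K⟦X⟧ˣ) : K⟦X⟧) * ((u ^ j : K⟦X⟧ˣ) : K⟦X⟧) := by
  rw [zpow_add, Units.val_mul]

private lemma adm_deriv_zpow {b : K}
    (du : PowerSeries.derivative K (u : K⟦X⟧) = PowerSeries.C b) :
    ∀ i : ℤ, PowerSeries.derivative K ((u ^ i : K⟦X⟧ˣ) : K⟦X⟧)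
      = PowerSeries.C ((i : K) * b) * ((u ^ (i - 1) : K⟦X⟧ˣ) : K⟦X⟧) := by
  have key : ∀ i : ℤ, PowerSeries.derivative K ((u ^ (i + 1) : K⟦X⟧ˣ) : K⟦X⟧)
      = ((u ^ i : K⟦X⟧ˣ) : K⟦X⟧) * PowerSeries.C b
        + (u : K⟦X⟧) * PowerSeries.derivative K ((u ^ i : K⟦X⟧ˣ) : K⟦X⟧) := by
    intro i
    rw [adm_zpow_val u i 1, zpow_one, Derivation.leibniz, smul_eq_mul, smul_eq_mul, du]
  intro i
  induction i using Int.induction_on with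
  | zero => simp
  | succ k ih =>
    have hu2 : (u : K⟦X⟧) * ((u ^ ((k : ℤ) - 1) : K⟦X⟧ˣ) : K⟦X⟧)
        = ((u ^ (k : ℤ) : K⟦X⟧ˣ) : K⟦X⟧) := by
      have h' := (adm_zpow_val u 1 ((k : ℤ) - 1))
      rw [zpow_one, show (1 + ((k : ℤ) - 1)) = (k : ℤ) from by ring] at h'
      exact h'.symm
    have hC : PowerSeries.C ((((k : ℤ) + 1 : ℤ) : K) * b)
        = PowerSeries.C (((k : ℤ) : K) * b) + PowerSeries.C b := by
      rw [← map_add]; push_cast; ring_nf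
    rw [key, ih, show ((k : ℤ) + 1 - 1) = (k : ℤ) by ring, hC]
    linear_combination PowerSeries.C (((k : ℤ) : K) * b) * hu2
  | pred k ih =>
    have h := key (-(k : ℤ) - 1)
    rw [show (-(k : ℤ) - 1 + 1) = -(k : ℤ) by ring, ih] at h
    have hC : PowerSeries.C (((-(k : ℤ) - 1 : ℤ) : K) * b)
        = PowerSeries.C (((-(k : ℤ) : ℤ)) * b : K) - PowerSeries.C b := by
      rw [← map_sub]; push_cast; ring_nf
    have hmul : (u : K⟦X⟧) * PowerSeries.derivative K ((u ^ (-(k : ℤ) - 1) : K⟦X⟧ˣ) : K⟦X⟧)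
        = PowerSeries.C (((-(k : ℤ) - 1 : ℤ) : K) * b)
            * ((u ^ (-(k : ℤ) - 1) : K⟦X⟧ˣ) : K⟦X⟧) := by
      rw [hC]; linear_combination -h
    have hinv : ((u⁻¹ : K⟦X⟧ˣ) : K⟦X⟧) * (u : K⟦X⟧) = 1 := by
      rw [← Units.val_mul, inv_mul_cancel, Units.val_one]
    have hu3 : ((u⁻¹ : K⟦X⟧ˣ) : K⟦X⟧) * ((u ^ (-(k : ℤ) - 1) : K⟦X⟧ˣ) : K⟦X⟧)
        = ((u ^ (-(k : ℤ) - 1 - 1) : K⟦X⟧ˣ) : K⟦X⟧) := by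
      have h' := (adm_zpow_val u (-1) (-(k : ℤ) - 1))
      rw [zpow_neg_one, show ((-1) + (-(k : ℤ) - 1)) = (-(k : ℤ) - 1 - 1) from by ring] at h'
      exact h'.symm
    calc PowerSeries.derivative K ((u ^ (-(k : ℤ) - 1) : K⟦X⟧ˣ) : K⟦X⟧)
        = ((u⁻¹ : K⟦X⟧ˣ) : K⟦X⟧)
          * ((u : K⟦X⟧) * PowerSeries.derivative K ((u ^ (-(k : ℤ) - 1) : K⟦X⟧ˣ) : K⟦X⟧)) := by
          rw [← mul_assoc, hinv, one_mul]
      _ = PowerSeries.C (((-(k : ℤ) - 1 : ℤ) : K) * b)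
            * ((u ^ (-(k : ℤ) - 1 - 1) : K⟦X⟧ˣ) : K⟦X⟧) := by
          rw [hmul, ← hu3]; ring

private def admV (K : Type*) [Field K] (u : K⟦X⟧ˣ) (j : ℤ) : Submodule K K⟦X⟧ :=
  Submodule.span K {g : K⟦X⟧ | ∃ i : ℤ, i ≤ j ∧ g = ((u ^ i : K⟦X⟧ˣ) : K⟦X⟧)}

private lemma mem_admV {i j : ℤ} (h : i ≤ j) : ((u ^ i : K⟦X⟧ˣ) : K⟦X⟧) ∈ admV K u j :=
  Submodule.subset_span ⟨i, h, rfl⟩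

private lemma admV_mono {j j' : ℤ} (h : j ≤ j') : admV K u j ≤ admV K u j' :=
  Submodule.span_mono (fun g hg => by obtain ⟨i, hi, e⟩ := hg; exact ⟨i, hi.trans h, e⟩)

private lemma admV_mul {a c : K⟦X⟧} {i j : ℤ} (ha : a ∈ admV K u i) (hc : c ∈ admV K u j) :
    a * c ∈ admV K u (i + j) := by
  have hle : admV K u i * admV K u j ≤ admV K u (i + j) := by
    rw [admV, admV, Submodule.span_mul_span]
    apply Submodule.span_le.2
    rintro g ⟨g1, ⟨i1, hi1, rfl⟩, g2, ⟨i2, hi2, rfl⟩, rfl⟩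
    exact Submodule.subset_span ⟨i1 + i2, add_le_add hi1 hi2, (adm_zpow_val u i1 i2).symm⟩
  exact hle (Submodule.mul_mem_mul ha hc)

private lemma admV_deriv {b : K}
    (du : PowerSeries.derivative K (u : K⟦X⟧) = PowerSeries.C b)
    {j : ℤ} {a : K⟦X⟧} (h : a ∈ admV K u j) :
    PowerSeries.derivative K a ∈ admV K u (j - 1) := by
  induction h using Submodule.span_induction with
  | mem g hg =>
    obtain ⟨i, hi, rfl⟩ := hg
    rw [adm_deriv_zpow u du, ← smul_eq_C_mul]
    exact Submodule.smul_mem _ _ (mem_admV u (by omega))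
  | zero => rw [map_zero]; exact zero_mem _
  | add x y hx hy ihx ihy => rw [map_add]; exact add_mem ihx ihy
  | smul c x hx ih => rw [Derivation.map_smul]; exact Submodule.smul_mem _ _ ih

private lemma admV_deriv0 {b : K}
    (du : PowerSeries.derivative K (u : K⟦X⟧) = PowerSeries.C b)
    {a : K⟦X⟧} (h : a ∈ admV K u 0) :
    PowerSeries.derivative K a ∈ admV K u (-2) := by
  induction h using Submodule.span_induction with
  | mem g hg =>
    obtain ⟨i, hi, rfl⟩ := hg
    rw [adm_deriv_zpow u du]
    rcases eq_or_lt_of_le hi with h0 | h0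
    · subst h0; simp
    · rw [← smul_eq_C_mul]
      exact Submodule.smul_mem _ _ (mem_admV u (by omega))
  | zero => rw [map_zero]; exact zero_mem _
  | add x y hx hy ihx ihy => rw [map_add]; exact add_mem ihx ihy
  | smul c x hx ih => rw [Derivation.map_smul]; exact Submodule.smul_mem _ _ ih

private lemma admV_integ {b : K}
    (du : PowerSeries.derivative K (u : K⟦X⟧) = PowerSeries.C b) (hb : b ≠ 0)
    {a : K⟦X⟧} (h : a ∈ admV K u (-2)) :
    ∃ g ∈ admV K u (-1), PowerSeries.derivative K g = a := by
  have hle : admV K u (-2) ≤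
      Submodule.map (PowerSeries.derivative K).toLinearMap (admV K u (-1)) := by
    apply Submodule.span_le.2
    rintro g ⟨i, hi, rfl⟩
    have hne : (((i + 1 : ℤ) : K) * b) ≠ 0 :=
      mul_ne_zero (Int.cast_ne_zero.2 (by omega)) hb
    refine ⟨(((i + 1 : ℤ) : K) * b)⁻¹ • ((u ^ (i + 1) : K⟦X⟧ˣ) : K⟦X⟧),
      Submodule.smul_mem _ _ (mem_admV u (by omega)), ?_⟩
    show PowerSeries.derivative K _ = _
    rw [Derivation.map_smul, adm_deriv_zpow u du, show (i + 1 - 1 : ℤ) = i by ring,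
      smul_eq_C_mul, ← mul_assoc, ← map_mul, inv_mul_cancel₀ hne, map_one, one_mul]
  obtain ⟨g, hg, hgd⟩ := hle h
  exact ⟨g, hg, hgd⟩

private lemma admV_C (c : K) : PowerSeries.C c ∈ admV K u 0 := by
  have h1 : PowerSeries.C c = c • ((u ^ (0 : ℤ) : K⟦X⟧ˣ) : K⟦X⟧) := by
    simp [smul_eq_C_mul]
  rw [h1]
  exact Submodule.smul_mem _ _ (mem_admV u le_rfl)

private lemma admV_one : (1 : K⟦X⟧) ∈ admV K u 0 := by
  have h1 : (1 : K⟦X⟧) = ((u ^ (0 : ℤ) : K⟦X⟧ˣ) : K⟦X⟧) := by simp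
  rw [h1]; exact mem_admV u le_rfl

private lemma admV_iter {b : K}
    (du : PowerSeries.derivative K (u : K⟦X⟧) = PowerSeries.C b) :
    ∀ p : ℕ, 1 ≤ p → ∀ a ∈ admV K u 0,
      (⇑(PowerSeries.derivative K))^[p] a ∈ admV K u (-(p : ℤ) - 1) := by
  intro p
  induction p with
  | zero => omega
  | succ q ih =>
    intro _ a ha
    rcases Nat.eq_zero_or_pos q with hq | hq
    · subst hq
      rw [Function.iterate_one]
      have := admV_deriv0 u du ha
      convert this using 2 <;> norm_num
    · rw [Function.iterate_succ_apply']
      have := admV_deriv u du (ih hq a ha)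
      convert this using 2 <;> (push_cast; ring)

end AuxAdm

/-- **Admissibility lemma for a degree-one polynomial `f`.**
Let `K` be a field of characteristic zero and `f ∈ K[x]` of degree one with `f(0) ≠ 0`, so
that `f` becomes a unit `u` of `K[[x]]` and `K[x][f⁻¹]` embeds into `K[[x]]`.  Fix `n ≥ 0`
and elements `A l p ∈ K[x][f⁻¹]` for `0 ≤ l ≤ n`, `p ≥ 0`, vanishing for `p ≥ N`.
The order conditions `Ord(A l 0) ≤ -2` and `Ord(A l p) ≤ p - 1` for `p ≥ 1` (with `Ord`
the largest exponent in the unique expansion `A = ∑ᵢ aᵢ fⁱ`) are expressed by membership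
in the `K`-span of the corresponding integer powers of `f`.  Then for any sequence
`(R m)` in `K[[x]]` with `R 0 = 1`, `R j = 0` for `j < 0`, satisfying for all `m ≥ 1`
`dR_m/dx = ∑_{l=0}^{n} ∑_{p} A l p · (d/dx)^p R_{m-1-l}`, every `R m` lies in the
subring `K[x][f⁻¹]` of `K[[x]]`. -/
theorem admissible_degree_one
    (K : Type*) [Field K] [CharZero K]
    (f : Polynomial K) (hdeg : f.degree = 1) (hf0 : Polynomial.eval 0 f ≠ 0)
    (u : K⟦X⟧ˣ) (hu : (u : K⟦X⟧) = (f : K⟦X⟧))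
    (n N : ℕ) (A : ℕ → ℕ → K⟦X⟧)
    (hAfin : ∀ l p, N ≤ p → A l p = 0)
    (hA0 : ∀ l ≤ n, A l 0 ∈ Submodule.span K
      {g : K⟦X⟧ | ∃ j : ℤ, j ≤ -2 ∧ g = ((u ^ j : K⟦X⟧ˣ) : K⟦X⟧)})
    (hAp : ∀ l ≤ n, ∀ p : ℕ, 1 ≤ p → A l p ∈ Submodule.span K
      {g : K⟦X⟧ | ∃ j : ℤ, j ≤ (p : ℤ) - 1 ∧ g = ((u ^ j : K⟦X⟧ˣ) : K⟦X⟧)})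
    (R : ℤ → K⟦X⟧)
    (hRneg : ∀ j : ℤ, j < 0 → R j = 0)
    (hR0 : R 0 = 1)
    (hrec : ∀ m : ℤ, 1 ≤ m →
      PowerSeries.derivative K (R m) =
        ∑ l ∈ Finset.range (n + 1), ∑ p ∈ Finset.range N,
          A l p * (⇑(PowerSeries.derivative K))^[p] (R (m - 1 - (l : ℤ)))) :
    ∀ m : ℤ, R m ∈
      Algebra.adjoin K {PowerSeries.X, ((u⁻¹ : K⟦X⟧ˣ) : K⟦X⟧)} := by

  classical
  have hbne : f.coeff 1 ≠ 0 := Polynomial.coeff_ne_zero_of_eq_degree hdeg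
  have du : PowerSeries.derivative K (u : K⟦X⟧) = PowerSeries.C (f.coeff 1) := by
    rw [hu, PowerSeries.derivative_coe]
    have hd : Polynomial.derivative f = Polynomial.C (f.coeff 1) := by
      conv_lhs => rw [Polynomial.eq_X_add_C_of_degree_le_one hdeg.le]
      simp
    rw [hd, Polynomial.coe_C]
  have hVle : ∀ g ∈ admV K u 0,
      g ∈ Algebra.adjoin K {PowerSeries.X, ((u⁻¹ : K⟦X⟧ˣ) : K⟦X⟧)} := by
    intro g hg
    have hle : admV K u 0 ≤ Subalgebra.toSubmodule
        (Algebra.adjoin K {PowerSeries.X, ((u⁻¹ : K⟦X⟧ˣ) : K⟦X⟧)}) := by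
      apply Submodule.span_le.2
      rintro g ⟨i, hi, rfl⟩
      have h1 : (u⁻¹ : K⟦X⟧ˣ) ^ ((-i).toNat) = u ^ i := by
        rw [← zpow_natCast, Int.toNat_of_nonneg (by omega : (0:ℤ) ≤ -i), inv_zpow,
          ← zpow_neg, neg_neg]
      show ((u ^ i : K⟦X⟧ˣ) : K⟦X⟧) ∈ Algebra.adjoin K _
      rw [← h1, Units.val_pow_eq_pow_val]
      exact pow_mem (Algebra.subset_adjoin (by simp)) _
    exact hle hg
  have hnat : ∀ k : ℕ, R (k : ℤ) ∈ admV K u 0 := by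
    intro k
    induction k using Nat.strong_induction_on with
    | _ k ih =>
      cases k with
      | zero => rw [Nat.cast_zero, hR0]; exact admV_one u
      | succ k' =>
        have hm : (1 : ℤ) ≤ ((k' + 1 : ℕ) : ℤ) := by omega
        have hprev : ∀ j : ℤ, j < ((k' + 1 : ℕ) : ℤ) → R j ∈ admV K u 0 := by
          intro j hj
          rcases lt_or_ge j 0 with hneg | hpos
          · rw [hRneg j hneg]; exact zero_mem _
          · have hj' : j = ((j.toNat : ℕ) : ℤ) := (Int.toNat_of_nonneg hpos).symm
            rw [hj']
            exact ih j.toNat (by omega)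
        have hrhs : PowerSeries.derivative K (R ((k' + 1 : ℕ) : ℤ)) ∈ admV K u (-2) := by
          rw [hrec _ hm]
          apply Submodule.sum_mem
          intro l hl
          apply Submodule.sum_mem
          intro p _
          have hln : l ≤ n := by
            have := Finset.mem_range.1 hl; omega
          have hRprev : R (((k' + 1 : ℕ) : ℤ) - 1 - (l : ℤ)) ∈ admV K u 0 :=
            hprev _ (by omega)
          rcases Nat.eq_zero_or_pos p with hp0 | hp1
          · subst hp0
            have hA : A l 0 ∈ admV K u (-2) := hA0 l hln
            simpa using admV_mul u hA hRprev
          · have hA : A l p ∈ admV K u ((p : ℤ) - 1) := hAp l hln p hp1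
            have hit := admV_iter u du p hp1 _ hRprev
            have hprod := admV_mul u hA hit
            rw [show ((p : ℤ) - 1) + (-(p : ℤ) - 1) = -2 by ring] at hprod
            exact hprod
        obtain ⟨g, hg, hgd⟩ := admV_integ u du hbne hrhs
        have heq : R ((k' + 1 : ℕ) : ℤ) = g + PowerSeries.C
            (PowerSeries.constantCoeff (R ((k' + 1 : ℕ) : ℤ))
              - PowerSeries.constantCoeff g) := by
          apply PowerSeries.derivative.ext
          · rw [map_add, PowerSeries.derivative_C, add_zero, hgd]
          · rw [map_add, PowerSeries.constantCoeff_C]; ring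
        rw [heq]
        exact add_mem (admV_mono u (by norm_num) hg) (admV_C u _)
  intro m
  rcases lt_or_ge m 0 with hneg | hpos
  · rw [hRneg m hneg]; exact zero_mem _
  · have hm' : m = ((m.toNat : ℕ) : ℤ) := (Int.toNat_of_nonneg hpos).symm
    rw [hm']
    exact hVle _ (hnat m.toNat)
end

section
/- Let K be a field of characteristic zero and let f ∈ K[x] be a polynomial of degree two with f(0) ≠ 0, so that K[x][f^{-1}] embeds into K[[x]]. Let K_f ⊂ K[x][f^{-1}] be the K-linear span of {f^i : i ∈ \mathbb{Z}}, and for A = \sum_i a_i f^i ∈ K_f let Ord(A) be the largest i with a_i ≠ 0. Fix n ≥ 0 and elements A_{lp} ∈ K[x][f^{-1}] for 0 ≤ l ≤ n, p ≥ 0, only finitely many nonzero, of the following form: A_{lp} = B_{lp} if p is odd and A_{lp} = (df/dx)·B_{lp} if p is even, where B_{lp} ∈ K_f satisfy Ord(B_{l0}) ≤ -2 and Ord(B_{lp}) ≤ \lfloor (p-1)/2 \rfloor for p ≥ 1. Then for any sequence (R_m)_{m≥0} in K[[x]] with R_0 = 1 satisfying, for every m ≥ 1, dR_m/dx = \sum_{l=0}^{n}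 \sum_{p≥0} A_{lp} · (d/dx)^p R_{m-1-l} (with R_j = 0 for j < 0), every R_m lies in the subring K[x][f^{-1}] of K[[x]]. -/
open PowerSeries

open PowerSeries

section Aux
variable {K : Type*} [Field K] [CharZero K] (u : K⟦X⟧ˣ)

omit [CharZero K] in
lemma myZpowSucc (i : ℤ) : ((u ^ (i+1) : K⟦X⟧ˣ) : K⟦X⟧) = ↑(u^i) * ↑u := by
  rw [zpow_add_one]; rfl

/-- derivative of an integer power of a unit -/
lemma myDerivZpow (j : ℤ) :
    derivative K ((u ^ j : K⟦X⟧ˣ) : K⟦X⟧) =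
      C (j : K) * derivative K (u : K⟦X⟧) * ((u ^ (j-1) : K⟦X⟧ˣ) : K⟦X⟧) := by
  have e1 : (↑u : K⟦X⟧) * (↑u⁻¹ : K⟦X⟧)^2 = ↑u⁻¹ := by
    rw [pow_two, ← mul_assoc, ← Units.val_mul, mul_inv_cancel, Units.val_one, one_mul]
  induction j using Int.induction_on with
  | zero => simp
  | succ k ih =>
      have h2 : ((u ^ (k:ℤ) : K⟦X⟧ˣ) : K⟦X⟧) = ↑(u^((k:ℤ)-1)) * ↑u := by
        have := myZpowSucc u ((k:ℤ)-1); rwa [sub_add_cancel] at this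
      rw [myZpowSucc, Derivation.leibniz, ih, smul_eq_mul, smul_eq_mul,
        add_sub_cancel_right, h2]
      simp only [Int.cast_add, Int.cast_natCast, Int.cast_one, map_add, map_one]
      ring
  | pred k ih =>
      have h1 : ((u ^ (-(k:ℤ)-1) : K⟦X⟧ˣ) : K⟦X⟧) = ↑(u^(-(k:ℤ))) * ↑u⁻¹ := by
        rw [sub_eq_add_neg, zpow_add, zpow_neg_one]; rfl
      have h2 : ((u ^ (-(k:ℤ)-1-1) : K⟦X⟧ˣ) : K⟦X⟧) = ↑(u^(-(k:ℤ)-1)) * ↑u⁻¹ := by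
        rw [show (-(k:ℤ)-1-1) = (-(k:ℤ)-1) + (-1) by ring, zpow_add, zpow_neg_one]; rfl
      have key : ((u ^ (-(k:ℤ)) : K⟦X⟧ˣ) : K⟦X⟧) = ↑(u^(-(k:ℤ)-1)) * ↑u := by
        have := myZpowSucc u (-(k:ℤ)-1); rwa [sub_add_cancel] at this
      rw [h1, Derivation.leibniz, ih, smul_eq_mul, smul_eq_mul, derivative_inv, h2, h1, key]
      simp only [Int.cast_sub, Int.cast_neg, Int.cast_natCast, Int.cast_one, map_sub,
        map_neg, map_one]
      ring
end Aux

section Mach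
variable {K : Type*} [Field K] [CharZero K] (u : K⟦X⟧ˣ)

omit [CharZero K] in
lemma myZpowSucc' (i : ℤ) : ((u ^ (i+1) : K⟦X⟧ˣ) : K⟦X⟧) = ↑(u^i) * ↑u := by
  rw [zpow_add_one]; rfl

/-- the `K`-span of powers `u^j`, `j ≤ t`. -/
noncomputable def Esp (t : ℤ) : Submodule K K⟦X⟧ :=
  Submodule.span K {g : K⟦X⟧ | ∃ j : ℤ, j ≤ t ∧ g = ((u ^ j : K⟦X⟧ˣ) : K⟦X⟧)}

/-- the `K`-span of `u' * u^j`, `j ≤ t`. -/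
noncomputable def Osp (t : ℤ) : Submodule K K⟦X⟧ :=
  Submodule.span K {g : K⟦X⟧ | ∃ j : ℤ, j ≤ t ∧
    g = derivative K (u : K⟦X⟧) * ((u ^ j : K⟦X⟧ˣ) : K⟦X⟧)}

omit [CharZero K] in
lemma mem_Esp {j t : ℤ} (h : j ≤ t) : ((u ^ j : K⟦X⟧ˣ) : K⟦X⟧) ∈ Esp u t :=
  Submodule.subset_span ⟨j, h, rfl⟩

omit [CharZero K] in
lemma Esp_mono {s t : ℤ} (h : s ≤ t) : Esp u s ≤ Esp u t :=
  Submodule.span_mono (fun g ⟨j, hj, hg⟩ => ⟨j, hj.trans h, hg⟩)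

omit [CharZero K] in
lemma Osp_mono {s t : ℤ} (h : s ≤ t) : Osp u s ≤ Osp u t :=
  Submodule.span_mono (fun g ⟨j, hj, hg⟩ => ⟨j, hj.trans h, hg⟩)

omit [CharZero K] in
lemma mul_Esp_Esp {s t : ℤ} {a b : K⟦X⟧} (ha : a ∈ Esp u s) (hb : b ∈ Esp u t) :
    a * b ∈ Esp u (s + t) := by
  have hle : Esp u s * Esp u t ≤ Esp u (s + t) := by
    rw [Esp, Esp, Submodule.span_mul_span]
    rw [Submodule.span_le]
    rintro g ⟨x, ⟨i, hi, rfl⟩, y, ⟨j, hj, rfl⟩, rfl⟩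
    dsimp only
    rw [← Units.val_mul, ← zpow_add]
    exact Submodule.subset_span ⟨i + j, by omega, rfl⟩
  exact hle (Submodule.mul_mem_mul ha hb)

omit [CharZero K] in
lemma mul_Esp_Osp {s t : ℤ} {a b : K⟦X⟧} (ha : a ∈ Esp u s) (hb : b ∈ Osp u t) :
    a * b ∈ Osp u (s + t) := by
  have hle : Esp u s * Osp u t ≤ Osp u (s + t) := by
    rw [Esp, Osp, Submodule.span_mul_span, Submodule.span_le]
    rintro g ⟨x, ⟨i, hi, rfl⟩, y, ⟨j, hj, rfl⟩, rfl⟩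
    dsimp only
    refine Submodule.subset_span ⟨i + j, by omega, ?_⟩
    rw [zpow_add, Units.val_mul]; ring
  exact hle (Submodule.mul_mem_mul ha hb)

omit [CharZero K] in
lemma Du_mul_Esp {t : ℤ} {a : K⟦X⟧} (ha : a ∈ Esp u t) :
    derivative K (u : K⟦X⟧) * a ∈ Osp u t := by
  have : Submodule.map (LinearMap.mulLeft K (derivative K (u : K⟦X⟧))) (Esp u t)
      ≤ Osp u t := by
    rw [Esp, Submodule.map_span_le]
    rintro g ⟨j, hj, rfl⟩
    exact Submodule.subset_span ⟨j, hj, rfl⟩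
  exact this ⟨a, ha, rfl⟩

lemma D_Esp {t : ℤ} {a : K⟦X⟧} (ha : a ∈ Esp u t) :
    derivative K a ∈ Osp u (t - 1) := by
  have : Submodule.map (derivative K).toLinearMap (Esp u t) ≤ Osp u (t - 1) := by
    rw [Esp, Submodule.map_span_le]
    rintro g ⟨j, hj, rfl⟩
    show derivative K _ ∈ _
    rw [myDerivZpow, ← smul_eq_C_mul, smul_mul_assoc]
    exact Submodule.smul_mem _ _ (Submodule.subset_span ⟨j - 1, by omega, rfl⟩)
  exact this ⟨a, ha, rfl⟩

lemma D_Osp {α β γ : K}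
    (hsq : derivative K (u : K⟦X⟧) ^ 2 = C α * ↑u + C β)
    (hdd : derivative K (derivative K (u : K⟦X⟧)) = C γ)
    {t : ℤ} {a : K⟦X⟧} (ha : a ∈ Osp u t) :
    derivative K a ∈ Esp u t := by
  have : Submodule.map (derivative K).toLinearMap (Osp u t) ≤ Esp u t := by
    rw [Osp, Submodule.map_span_le]
    rintro g ⟨j, hj, rfl⟩
    show derivative K _ ∈ _
    have key : derivative K (derivative K (u : K⟦X⟧) * ((u ^ j : K⟦X⟧ˣ) : K⟦X⟧))
        = (γ + (j:K) * α) • ((u ^ j : K⟦X⟧ˣ) : K⟦X⟧)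
          + ((j:K) * β) • ((u ^ (j-1) : K⟦X⟧ˣ) : K⟦X⟧) := by
      rw [Derivation.leibniz, myDerivZpow, smul_eq_mul, smul_eq_mul,
        smul_eq_C_mul, smul_eq_C_mul]
      have hz : ((u ^ j : K⟦X⟧ˣ) : K⟦X⟧) = ↑(u ^ (j-1)) * ↑u := by
        have := myZpowSucc' u (j - 1); rwa [sub_add_cancel] at this
      simp only [map_add, map_mul]
      linear_combination (C (j:K) * ((u ^ (j-1) : K⟦X⟧ˣ) : K⟦X⟧)) * hsq
        + ((u ^ j : K⟦X⟧ˣ) : K⟦X⟧) * hdd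
        - (C (j:K) * C α) * hz
    rw [key]
    exact Submodule.add_mem _
      (Submodule.smul_mem _ _ (Submodule.subset_span ⟨j, hj, rfl⟩))
      (Submodule.smul_mem _ _ (Submodule.subset_span ⟨j - 1, by omega, rfl⟩))
  exact this ⟨a, ha, rfl⟩

end Mach
section Mach2
variable {K : Type*} [Field K] [CharZero K] (u : K⟦X⟧ˣ)

lemma D_iter_zero : ∀ q : ℕ, (⇑(derivative K))^[q] (0 : K⟦X⟧) = 0 := by
  intro q; induction q with
  | zero => simp
  | succ q ih => rw [Function.iterate_succ_apply, map_zero]; exact ih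

lemma D_iter_one {p : ℕ} (hp : 1 ≤ p) : (⇑(derivative K))^[p] (1 : K⟦X⟧) = 0 := by
  obtain ⟨q, rfl⟩ : ∃ q, p = q + 1 := ⟨p - 1, by omega⟩
  rw [Function.iterate_succ_apply, Derivation.map_one_eq_zero]
  exact D_iter_zero _

lemma D_iter_linear (p : ℕ) (x y : K⟦X⟧) (k : K) :
    (⇑(derivative K))^[p] (k • x + y)
      = k • (⇑(derivative K))^[p] x + (⇑(derivative K))^[p] y := by
  induction p generalizing x y with
  | zero => simp
  | succ p ih =>
      rw [Function.iterate_succ_apply, Function.iterate_succ_apply,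
        Function.iterate_succ_apply, map_add, Derivation.map_smul]
      exact ih _ _

lemma D_iter_even {α β γ : K}
    (hsq : derivative K (u : K⟦X⟧) ^ 2 = C α * ↑u + C β)
    (hdd : derivative K (derivative K (u : K⟦X⟧)) = C γ) :
    ∀ q : ℕ, ∀ t : ℤ, ∀ a ∈ Esp u t,
      (⇑(derivative K))^[2*q] a ∈ Esp u (t - q) := by
  intro q
  induction q with
  | zero => intro t a ha; simpa using ha
  | succ q ih =>
      intro t a ha
      have h1 : (⇑(derivative K))^[2*(q+1)] a
          = derivative K (derivative K ((⇑(derivative K))^[2*q] a)) := by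
        rw [show 2*(q+1) = 1 + (1 + 2*q) by ring, Function.iterate_add_apply,
          Function.iterate_add_apply, Function.iterate_one]
      rw [h1]
      have h2 := D_Esp u (ih t a ha)
      have h3 := D_Osp u hsq hdd h2
      exact Esp_mono u (by omega) h3

lemma D_iter_odd {α β γ : K}
    (hsq : derivative K (u : K⟦X⟧) ^ 2 = C α * ↑u + C β)
    (hdd : derivative K (derivative K (u : K⟦X⟧)) = C γ)
    (q : ℕ) (t : ℤ) (a : K⟦X⟧) (ha : a ∈ Esp u t) :
    (⇑(derivative K))^[2*q+1] a ∈ Osp u (t - q - 1) := by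
  rw [Function.iterate_succ_apply', show (t - q - 1 : ℤ) = (t - q) - 1 by ring]
  exact D_Esp u (D_iter_even u hsq hdd q t a ha)

lemma Osp_le_map_D :
    Osp u (-2) ≤ Submodule.map (derivative K : K⟦X⟧ →ₗ[K] K⟦X⟧) (Esp u (-1)) := by
  rw [Osp, Submodule.span_le]
  rintro g ⟨j, hj, rfl⟩
  have h1 : ((j : K) + 1) ≠ 0 := by
    have : ((j + 1 : ℤ) : K) ≠ 0 := Int.cast_ne_zero.mpr (by omega)
    push_cast at this; exact this
  refine ⟨((j:K)+1)⁻¹ • ((u ^ (j+1) : K⟦X⟧ˣ) : K⟦X⟧),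
    Submodule.smul_mem _ _ (mem_Esp u (by omega)), ?_⟩
  show derivative K _ = _
  rw [Derivation.map_smul, myDerivZpow, add_sub_cancel_right]
  push_cast
  rw [mul_assoc, ← smul_eq_C_mul, smul_smul, inv_mul_cancel₀ h1, one_smul]

lemma eq_const_of_D_eq_zero {g : K⟦X⟧} (h : derivative K g = 0) :
    g = C (constantCoeff g) := by
  apply derivative.ext
  · rw [h, derivative_C]
  · simp

end Mach2
lemma poly_facts {K : Type*} [Field K] (f : Polynomial K) (hdeg : f.degree = 2) :
    ∃ a b c : K,
      Polynomial.derivative (Polynomial.derivative f) = Polynomial.C (2*a) ∧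
      (Polynomial.derivative f)^2
        = Polynomial.C (4*a) * f + Polynomial.C (b^2 - 4*a*c) := by
  have hnd : f.natDegree = 2 := Polynomial.natDegree_eq_of_degree_eq_some hdeg
  obtain ⟨a, b, c, hf⟩ : ∃ a b c : K, f = Polynomial.C c + Polynomial.C b * Polynomial.X
      + Polynomial.C a * Polynomial.X ^ 2 := by
    refine ⟨f.coeff 2, f.coeff 1, f.coeff 0, ?_⟩
    have h3 := f.as_sum_range' 3 (by omega)
    conv_lhs => rw [h3]
    simp [Finset.sum_range_succ, ← Polynomial.C_mul_X_pow_eq_monomial]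
  refine ⟨a, b, c, ?_, ?_⟩ <;> rw [hf] <;>
    simp only [Polynomial.derivative_add, Polynomial.derivative_mul, Polynomial.derivative_C,
      Polynomial.derivative_X, Polynomial.derivative_X_pow, map_mul, map_sub, map_pow,
      map_ofNat, Polynomial.derivative_one, Polynomial.derivative_zero, map_one,
      Polynomial.C_eq_natCast, Polynomial.C_1, Polynomial.derivative_ofNat,
      Polynomial.derivative_natCast] <;> push_cast <;> ring



/-- **Admissibility lemma for a degree-two polynomial `f`.**
Let `K` be a field of characteristic zero and `f ∈ K[x]` of degree two with `f(0) ≠ 0`, so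
that `f` becomes a unit `u` of `K[[x]]` and `K[x][f⁻¹]` embeds into `K[[x]]`.  Let
`K_f ⊂ K[x][f⁻¹]` be the `K`-linear span of the integer powers of `f`, and for
`A = ∑ᵢ aᵢ fⁱ ∈ K_f` let `Ord(A)` be the largest `i` with `aᵢ ≠ 0`.  Fix `n ≥ 0` and
`A l p` for `0 ≤ l ≤ n`, `p ≥ 0`, vanishing for `p ≥ N`, of the form `A l p = B l p` for
`p` odd and `A l p = (df/dx)·B l p` for `p` even, where `B l p ∈ K_f` satisfy
`Ord(B l 0) ≤ -2` and `Ord(B l p) ≤ ⌊(p-1)/2⌋` for `p ≥ 1` (expressed by membership in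
the `K`-span of the corresponding powers of `f`).  Then for any sequence `(R m)` in
`K[[x]]` with `R 0 = 1`, `R j = 0` for `j < 0`, satisfying for all `m ≥ 1`
`dR_m/dx = ∑_{l=0}^{n} ∑_{p} A l p · (d/dx)^p R_{m-1-l}`, every `R m` lies in the
subring `K[x][f⁻¹]` of `K[[x]]`. -/
theorem admissible_degree_two
    (K : Type*) [Field K] [CharZero K]
    (f : Polynomial K) (hdeg : f.degree = 2) (hf0 : Polynomial.eval 0 f ≠ 0)
    (u : K⟦X⟧ˣ) (hu : (u : K⟦X⟧) = (f : K⟦X⟧))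
    (n N : ℕ) (A B : ℕ → ℕ → K⟦X⟧)
    (hAfin : ∀ l p, N ≤ p → A l p = 0)
    (hAB : ∀ l p, A l p =
      if Odd p then B l p else ((Polynomial.derivative f : Polynomial K) : K⟦X⟧) * B l p)
    (hB0 : ∀ l ≤ n, B l 0 ∈ Submodule.span K
      {g : K⟦X⟧ | ∃ j : ℤ, j ≤ -2 ∧ g = ((u ^ j : K⟦X⟧ˣ) : K⟦X⟧)})
    (hBp : ∀ l ≤ n, ∀ p : ℕ, 1 ≤ p → B l p ∈ Submodule.span K
      {g : K⟦X⟧ | ∃ j : ℤ, j ≤ ((p : ℤ) - 1) / 2 ∧ g = ((u ^ j : K⟦X⟧ˣ) : K⟦X⟧)})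
    (R : ℤ → K⟦X⟧)
    (hRneg : ∀ j : ℤ, j < 0 → R j = 0)
    (hR0 : R 0 = 1)
    (hrec : ∀ m : ℤ, 1 ≤ m →
      PowerSeries.derivative K (R m) =
        ∑ l ∈ Finset.range (n + 1), ∑ p ∈ Finset.range N,
          A l p * (⇑(PowerSeries.derivative K))^[p] (R (m - 1 - (l : ℤ)))) :
    ∀ m : ℤ, R m ∈
      Algebra.adjoin K {PowerSeries.X, ((u⁻¹ : K⟦X⟧ˣ) : K⟦X⟧)} := by
  obtain ⟨a, b, c, hddp, hsqp⟩ := poly_facts f hdeg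
  have hDu : derivative K (↑u : K⟦X⟧) = ((Polynomial.derivative f : Polynomial K) : K⟦X⟧) := by
    rw [hu, derivative_coe]
  have hsq : derivative K (↑u : K⟦X⟧) ^ 2 = C (4*a) * (↑u : K⟦X⟧) + C (b^2 - 4*a*c) := by
    rw [hDu, hu, ← Polynomial.coe_pow, hsqp]
    simp [Polynomial.coe_add, Polynomial.coe_mul, Polynomial.coe_C]
  have hdd : derivative K (derivative K (↑u:K⟦X⟧)) = C (2*a) := by
    rw [hDu, derivative_coe, hddp, Polynomial.coe_C]
  have hone : (1 : K⟦X⟧) = ((u ^ (0:ℤ) : K⟦X⟧ˣ) : K⟦X⟧) := by simp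
  -- each summand of the recursion lies in `Osp u (-2)`
  have hsummand : ∀ l ∈ Finset.range (n+1), ∀ p ∈ Finset.range N, ∀ r ∈ Esp u 0,
      A l p * (⇑(derivative K))^[p] r ∈ Osp u (-2) := by
    intro l hl p _ r hr
    have hln : l ≤ n := by simpa [Nat.lt_succ_iff] using hl
    rcases Nat.eq_zero_or_pos p with rfl | hp1
    · rw [hAB, if_neg (by decide)]
      simp only [Function.iterate_zero, id_eq]
      rw [← hDu, mul_assoc]
      have h2 : B l 0 * r ∈ Esp u (-2 + 0) := mul_Esp_Esp u (hB0 l hln) hr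
      exact Osp_mono u (by omega) (Du_mul_Esp u h2)
    · -- split `r` into its constant part and the part of order `≤ -1`
      have hsplit : Esp u 0 ≤ (Submodule.span K {(1:K⟦X⟧)}) ⊔ Esp u (-1) := by
        rw [Esp, Submodule.span_le]
        rintro g ⟨j, hj, rfl⟩
        rcases eq_or_lt_of_le hj with h | h
        · apply Submodule.mem_sup_left
          rw [h, zpow_zero]
          exact Submodule.mem_span_singleton_self _
        · exact Submodule.mem_sup_right (mem_Esp u (by omega))
      obtain ⟨y, hy, z, hz, hyz⟩ := Submodule.mem_sup.mp (hsplit hr)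
      obtain ⟨k, rfl⟩ := Submodule.mem_span_singleton.mp hy
      rw [← hyz, D_iter_linear, D_iter_one hp1, smul_zero, zero_add]
      rcases Nat.even_or_odd p with he | ho
      · obtain ⟨q, hq⟩ := he
        have hq2 : p = 2*q := by omega
        have hq1 : 1 ≤ q := by omega
        subst hq2
        have hD := D_iter_even u hsq hdd q (-1) z hz
        rw [hAB, if_neg (by simp [Nat.not_odd_iff_even]),
          ← hDu, mul_assoc]
        have h2 := mul_Esp_Esp u (hBp l hln (2*q) (by omega)) hD
        exact Osp_mono u (by push_cast; omega) (Du_mul_Esp u h2)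
      · obtain ⟨q, hq⟩ := ho
        subst hq
        have hD := D_iter_odd u hsq hdd q (-1) z hz
        rw [hAB, if_pos ⟨q, rfl⟩]
        have h2 := mul_Esp_Osp u (hBp l hln (2*q+1) (by omega)) hD
        exact Osp_mono u (by push_cast; omega) h2
  -- the main induction
  have hkey : ∀ k : ℕ, R (k:ℤ) ∈ Esp u 0 := by
    intro k
    induction k using Nat.strong_induction_on with
    | _ k ih =>
      rcases Nat.eq_zero_or_pos k with rfl | hk
      · rw [Nat.cast_zero, hR0, hone]; exact mem_Esp u le_rfl
      · have h1 : (1:ℤ) ≤ (k:ℤ) := by exact_mod_cast hk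
        have hDR := hrec k h1
        have hmem : derivative K (R (k:ℤ)) ∈ Osp u (-2) := by
          rw [hDR]
          refine Submodule.sum_mem _ fun l hl => Submodule.sum_mem _ fun p hp => ?_
          refine hsummand l hl p hp _ ?_
          rcases lt_or_ge ((k:ℤ) - 1 - l) 0 with h | h
          · rw [hRneg _ h]; exact zero_mem _
          · obtain ⟨k', hk'⟩ : ∃ k' : ℕ, (k':ℤ) = (k:ℤ) - 1 - l :=
              ⟨((k:ℤ)-1-l).toNat, Int.toNat_of_nonneg h⟩
            rw [← hk']; exact ih k' (by omega)
        obtain ⟨S, hS, hDS⟩ := Submodule.mem_map.mp (Osp_le_map_D u hmem)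
        have hDS' : derivative K S = derivative K (R (k:ℤ)) := hDS
        have hzero : derivative K (R (k:ℤ) - S) = 0 := by
          rw [map_sub, hDS', sub_self]
        have hconst := eq_const_of_D_eq_zero hzero
        have hRk : R (k:ℤ) = S + C (constantCoeff (R (k:ℤ) - S)) := by
          rw [← hconst]; ring
        rw [hRk]
        refine Submodule.add_mem _ (Esp_mono u (by omega) hS) ?_
        have hC : C (constantCoeff (R (k:ℤ) - S))
            = (constantCoeff (R (k:ℤ) - S)) • ((u^(0:ℤ) : K⟦X⟧ˣ):K⟦X⟧) := by
          rw [smul_eq_C_mul, ← hone, mul_one]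
        rw [hC]
        exact Submodule.smul_mem _ _ (mem_Esp u le_rfl)
  -- conclusion
  intro m
  rcases lt_or_ge m 0 with h | h
  · rw [hRneg m h]; exact zero_mem _
  · have hm : R m = R ((m.toNat : ℕ) : ℤ) := by rw [Int.toNat_of_nonneg h]
    rw [hm]
    have hle : Esp u 0 ≤ Subalgebra.toSubmodule
        (Algebra.adjoin K {PowerSeries.X, ((u⁻¹ : K⟦X⟧ˣ) : K⟦X⟧)}) := by
      rw [Esp, Submodule.span_le]
      rintro g ⟨j, hj, rfl⟩
      have hj' : u ^ j = (u⁻¹) ^ ((-j).toNat) := by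
        rw [← zpow_natCast, Int.toNat_of_nonneg (by omega), inv_zpow, ← zpow_neg, neg_neg]
      rw [hj', Units.val_pow_eq_pow_val]
      exact pow_mem (Algebra.subset_adjoin (by simp)) _
    exact hle (hkey m.toNat)
end

section
/- Fix n ≥ 1 and let F = \mathbb{C}(\lambda_0,…,\lambda_n,z) be the field of rational functions in n+2 variables. For i ∈ {0,…,n} define the restricted I-function J_i ∈ F[[q]] by J_i = \sum_{d≥0} q^d · [\prod_{k=0}^{(n+1)d-1} (-(n+1)\lambda_i - kz)] / [\prod_{j=0}^{n} \prod_{k=1}^{d} (\lambda_i - \lambda_j + kz)]. Let D = q·d/dq be the derivation of F[[q]] and let M be the F-linear operator M = \lambda_i + zD on F[[q]]. Then J_i satisfies the Picard–Fuchs equation ( \prod_{j=0}^{n} (M - \lambda_j) - q·\prod_{k=0}^{n} (-(n+1)M - kz) ) J_i = 0, where the operators are composed and q·P denotes multiplication by q after applying P. -/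
open PowerSeries

set_option maxHeartbeats 2000000
set_option synthInstance.maxHeartbeats 1000000

noncomputable section

/-- The field `F = ℂ(λ₀, …, λₙ, z)` of rational functions in `n + 2` variables. -/
abbrev PFField (n : ℕ) : Type := FractionRing (MvPolynomial (Fin (n + 2)) ℂ)

/-- The equivariant weight `λⱼ ∈ F`, the image of the `j`-th variable. -/
def pfLam (n : ℕ) (j : Fin (n + 1)) : PFField n :=
  algebraMap (MvPolynomial (Fin (n + 2)) ℂ) (PFField n) (MvPolynomial.X j.castSucc)

/-- The equivariant variable `z ∈ F`, the image of the last variable. -/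
def pfZ (n : ℕ) : PFField n :=
  algebraMap (MvPolynomial (Fin (n + 2)) ℂ) (PFField n) (MvPolynomial.X (Fin.last (n + 1)))

/-- The restricted `I`-function
`Jᵢ = ∑_{d ≥ 0} q^d · ∏_{k=0}^{(n+1)d-1} (-(n+1)λᵢ - kz) /
  ∏_{j=0}^{n} ∏_{k=1}^{d} (λᵢ - λⱼ + kz) ∈ F[[q]]`. -/
def pfJ (n : ℕ) (i : Fin (n + 1)) : PowerSeries (PFField n) :=
  PowerSeries.mk fun d =>
    (∏ k ∈ Finset.range ((n + 1) * d),
        (-((n + 1 : PFField n) * pfLam n i) - ((k : ℕ) : PFField n) * pfZ n)) /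
    (∏ j : Fin (n + 1), ∏ k ∈ Finset.Icc 1 d,
        (pfLam n i - pfLam n j + ((k : ℕ) : PFField n) * pfZ n))

/-- The derivation `D = q · d/dq` on `F[[q]]`. -/
def pfD (n : ℕ) (ψ : PowerSeries (PFField n)) : PowerSeries (PFField n) :=
  PowerSeries.X * PowerSeries.derivative (PFField n) ψ

/-- The operator `M = λᵢ + z·D` on `F[[q]]`. -/
def pfM (n : ℕ) (i : Fin (n + 1)) (ψ : PowerSeries (PFField n)) : PowerSeries (PFField n) :=
  PowerSeries.C (R := PFField n) (pfLam n i) * ψ + PowerSeries.C (R := PFField n) (pfZ n) * pfD n ψ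

/-! ### Auxiliary lemmas -/

/-- The numerator factor product. -/
def pfNum (n : ℕ) (i : Fin (n + 1)) (d : ℕ) : PFField n :=
  ∏ k ∈ Finset.range ((n + 1) * d),
    (-((n + 1 : PFField n) * pfLam n i) - ((k : ℕ) : PFField n) * pfZ n)

/-- The denominator factor product. -/
def pfDen (n : ℕ) (i : Fin (n + 1)) (d : ℕ) : PFField n :=
  ∏ j : Fin (n + 1), ∏ k ∈ Finset.Icc 1 d,
    (pfLam n i - pfLam n j + ((k : ℕ) : PFField n) * pfZ n)

lemma coeff_pfJ (n : ℕ) (i : Fin (n + 1)) (d : ℕ) :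
    PowerSeries.coeff (R := PFField n) d (pfJ n i) = pfNum n i d / pfDen n i d := by
  simp [pfJ, pfNum, pfDen]

lemma pf_factor_ne_zero (n : ℕ) (i j : Fin (n + 1)) {k : ℕ} (hk : k ≠ 0) :
    pfLam n i - pfLam n j + ((k : ℕ) : PFField n) * pfZ n ≠ 0 := by
  have halg : pfLam n i - pfLam n j + ((k : ℕ) : PFField n) * pfZ n =
      algebraMap (MvPolynomial (Fin (n + 2)) ℂ) (PFField n)
        (MvPolynomial.X i.castSucc - MvPolynomial.X j.castSucc +
          ((k : ℕ) : MvPolynomial (Fin (n + 2)) ℂ) * MvPolynomial.X (Fin.last (n + 1))) := by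
    simp [pfLam, pfZ, map_sub, map_add, map_mul, map_natCast]
  rw [halg]
  intro hc
  have h0 : (MvPolynomial.X i.castSucc - MvPolynomial.X j.castSucc +
      ((k : ℕ) : MvPolynomial (Fin (n + 2)) ℂ) * MvPolynomial.X (Fin.last (n + 1))) = 0 := by
    apply IsFractionRing.injective (MvPolynomial (Fin (n + 2)) ℂ) (PFField n)
    rw [hc, map_zero]
  have := congrArg (MvPolynomial.eval fun v => if v = Fin.last (n + 1) then (1 : ℂ) else 0) h0
  simp [(Fin.castSucc_lt_last i).ne, (Fin.castSucc_lt_last j).ne, hk] at this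

lemma pfDen_ne_zero (n : ℕ) (i : Fin (n + 1)) (d : ℕ) : pfDen n i d ≠ 0 := by
  rw [pfDen]
  rw [Finset.prod_ne_zero_iff]
  intro j _
  rw [Finset.prod_ne_zero_iff]
  intro k hk
  rw [Finset.mem_Icc] at hk
  exact pf_factor_ne_zero n i j (by omega)

lemma coeff_pfD (n : ℕ) (d : ℕ) (ψ : PowerSeries (PFField n)) :
    PowerSeries.coeff (R := PFField n) d (pfD n ψ) =
      ((d : ℕ) : PFField n) * PowerSeries.coeff (R := PFField n) d ψ := by
  cases d with
  | zero => simp [pfD]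
  | succ d =>
    rw [pfD, PowerSeries.coeff_succ_X_mul, PowerSeries.coeff_derivative]
    push_cast
    ring

lemma coeff_pfM (n : ℕ) (i : Fin (n + 1)) (d : ℕ) (ψ : PowerSeries (PFField n)) :
    PowerSeries.coeff (R := PFField n) d (pfM n i ψ) =
      (pfLam n i + pfZ n * ((d : ℕ) : PFField n)) * PowerSeries.coeff (R := PFField n) d ψ := by
  rw [pfM, map_add, PowerSeries.coeff_C_mul, PowerSeries.coeff_C_mul, coeff_pfD]
  ring

lemma coeff_foldr (n : ℕ) : ∀ (m : ℕ)
    (L : Fin m → PowerSeries (PFField n) → PowerSeries (PFField n))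
    (g : Fin m → ℕ → PFField n),
    (∀ j d ψ, PowerSeries.coeff (R := PFField n) d (L j ψ) =
        g j d * PowerSeries.coeff (R := PFField n) d ψ) →
    ∀ ψ d, PowerSeries.coeff (R := PFField n) d ((List.ofFn L).foldr (· ∘ ·) id ψ) =
      (∏ j, g j d) * PowerSeries.coeff (R := PFField n) d ψ := by
  intro m
  induction m with
  | zero => intro L g h ψ d; simp
  | succ m ih =>
    intro L g h ψ d
    rw [List.ofFn_succ, List.foldr_cons]
    show PowerSeries.coeff (R := PFField n) d
      (L 0 ((List.ofFn fun j => L j.succ).foldr (· ∘ ·) id ψ)) = _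
    rw [h, ih (fun j => L j.succ) (fun j => g j.succ) (fun j => h j.succ),
      Fin.prod_univ_succ]
    ring

/-- **Picard–Fuchs equation for the restricted equivariant `I`-function of local `ℙⁿ`.**
For `n ≥ 1` and `i ∈ {0, …, n}`, the series `Jᵢ ∈ F[[q]]` satisfies
`(∏_{j=0}^{n} (M - λⱼ) - q · ∏_{k=0}^{n} (-(n+1)M - kz)) Jᵢ = 0`,
where `M = λᵢ + z·q·d/dq`, the operators are composed, and `q·P` denotes
multiplication by `q` after applying the operator `P`. -/
theorem picard_fuchs_restricted_I_function (n : ℕ) (hn : 1 ≤ n) (i : Fin (n + 1)) :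
    ((List.ofFn fun j : Fin (n + 1) =>
        fun ψ : PowerSeries (PFField n) =>
          pfM n i ψ - PowerSeries.C (R := PFField n) (pfLam n j) * ψ).foldr (· ∘ ·) id) (pfJ n i)
    - PowerSeries.X *
      (((List.ofFn fun k : Fin (n + 1) =>
          fun ψ : PowerSeries (PFField n) =>
            PowerSeries.C (R := PFField n) (-(n + 1 : PFField n)) * pfM n i ψ -
              PowerSeries.C (R := PFField n) (((k : ℕ) : PFField n) * pfZ n) * ψ).foldr (· ∘ ·) id)
        (pfJ n i)) = 0 := by
  rw [sub_eq_zero]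
  ext d
  have h1 := coeff_foldr n (n + 1)
    (fun j ψ => pfM n i ψ - PowerSeries.C (R := PFField n) (pfLam n j) * ψ)
    (fun j d => pfLam n i + pfZ n * ((d : ℕ) : PFField n) - pfLam n j)
    (by
      intro j d ψ
      rw [map_sub, coeff_pfM, PowerSeries.coeff_C_mul]
      ring)
  have h2 := coeff_foldr n (n + 1)
    (fun k ψ => PowerSeries.C (R := PFField n) (-(n + 1 : PFField n)) * pfM n i ψ -
        PowerSeries.C (R := PFField n) (((k : ℕ) : PFField n) * pfZ n) * ψ)
    (fun k d => -(n + 1 : PFField n) * (pfLam n i + pfZ n * ((d : ℕ) : PFField n)) -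
        ((k : ℕ) : PFField n) * pfZ n)
    (by
      intro k d ψ
      rw [map_sub, PowerSeries.coeff_C_mul, coeff_pfM, PowerSeries.coeff_C_mul]
      ring)
  rw [h1]
  cases d with
  | zero =>
    rw [PowerSeries.coeff_zero_X_mul]
    apply mul_eq_zero_of_left
    apply Finset.prod_eq_zero (Finset.mem_univ i)
    simp
  | succ d =>
    rw [PowerSeries.coeff_succ_X_mul, h2, coeff_pfJ, coeff_pfJ]
    -- recurrences
    have hD : pfDen n i (d + 1) = pfDen n i d *
        ∏ j : Fin (n + 1), (pfLam n i - pfLam n j + (((d + 1 : ℕ)) : PFField n) * pfZ n) := by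
      rw [pfDen, pfDen, ← Finset.prod_mul_distrib]
      apply Finset.prod_congr rfl
      intro j _
      rw [Finset.prod_Icc_succ_top (by omega)]
    have hN : pfNum n i (d + 1) = pfNum n i d *
        ∏ m ∈ Finset.range (n + 1),
          (-((n + 1 : PFField n) * pfLam n i) - (((n + 1) * d + m : ℕ) : PFField n) * pfZ n) := by
      rw [pfNum, pfNum, Nat.mul_succ, Finset.prod_range_add]
    have hQ : (∏ j : Fin (n + 1),
        (pfLam n i + pfZ n * (((d + 1 : ℕ)) : PFField n) - pfLam n j)) =
        ∏ j : Fin (n + 1), (pfLam n i - pfLam n j + (((d + 1 : ℕ)) : PFField n) * pfZ n) := by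
      apply Finset.prod_congr rfl
      intro j _
      ring
    have hP : (∏ k : Fin (n + 1),
        (-(n + 1 : PFField n) * (pfLam n i + pfZ n * ((d : ℕ) : PFField n)) -
          ((k : ℕ) : PFField n) * pfZ n)) =
        ∏ m ∈ Finset.range (n + 1),
          (-((n + 1 : PFField n) * pfLam n i) - (((n + 1) * d + m : ℕ) : PFField n) * pfZ n) := by
      rw [← Fin.prod_univ_eq_prod_range
        (fun m => -((n + 1 : PFField n) * pfLam n i) -
          (((n + 1) * d + m : ℕ) : PFField n) * pfZ n) (n + 1)]
      apply Finset.prod_congr rfl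
      intro k _
      push_cast
      ring
    rw [hQ, hP, hN, hD]
    have hden := pfDen_ne_zero n i d
    have hQne : (∏ j : Fin (n + 1),
        (pfLam n i - pfLam n j + (((d + 1 : ℕ)) : PFField n) * pfZ n)) ≠ 0 := by
      rw [Finset.prod_ne_zero_iff]
      intro j _
      exact pf_factor_ne_zero n i j (by omega)
    have key : ∀ Q P N D : PFField n, D ≠ 0 → Q ≠ 0 →
        Q * (N * P / (D * Q)) = P * (N / D) := by
      intro Q P N D hD hQ
      field_simp
    exact key _ _ _ _ hden hQne

end
end

section
/- Let K be a field of characteristic zero, let \lambda_0, \lambda_1 ∈ K be nonzero with \lambda_0 ≠ \lambda_1 and s_1 := \lambda_0 + \lambda_1 ≠ 0, and set s_2 = \lambda_0\lambda_1, f(x) = s_1 x - 2 s_2. Fix i ∈ {0,1} and define the rational functions A_{00}(x) = ( -s_1^2 s_2^2 + (-s_1^3 s_2 + 8 s_1 s_2^2) x + (2 s_1^4 - 9 s_1^2 s_2) x^2 ) / ( 4 (x s_1 - 2 s_2)^4 ), A_{01}(x) = ( 2 s_1 s_2^2 + (-s_1^2 s_2 - 8 s_2^2) x + (-s_1^3 +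 10 s_1 s_2) x^2 - s_1^2 x^3 ) / ( 2 (x s_1 - 2 s_2)^3 ), A_{02}(x) = ( s_2^2 - 2 s_1 s_2 x + (s_1^2 + s_2) x^2 - s_1 x^3 ) / ( (x s_1 - 2 s_2)^2 ). Since f(\lambda_i) = \lambda_i(\lambda_i - \lambda_{1-i}) ≠ 0, the ring K[x][f^{-1}] embeds into the ring K[[x - \lambda_i]] of formal power series at x = \lambda_i. Then for any sequence (\Phi_p)_{p≥0} in K[[x - \lambda_i]] with \Phi_0 = 1 satisfying, for all p ≥ 1, d\Phi_p/dx = A_{00}\Phi_{p-1} + A_{01} d\Phi_{p-1}/dx + A_{02} d^2\Phi_{p-1}/dx^2, every \Phi_p lies in the subring K[x][(s_1 x - 2 s_2)^{-1}] of K[[x - \lambda_i]]. -/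
open PowerSeries

noncomputable section

/-- The element `x = λᵢ + X` of `K[[X]] = K[[x - λᵢ]]`, i.e. the coordinate `x`
viewed in the ring of formal power series at `x = λᵢ`. -/
def xAt (K : Type*) [Field K] (c : K) : K⟦X⟧ := PowerSeries.X + PowerSeries.C (R := K) c

/-- `A₀₀(x) = (-s₁²s₂² + (-s₁³s₂ + 8s₁s₂²)x + (2s₁⁴ - 9s₁²s₂)x²) / (4(xs₁ - 2s₂)⁴)`,
viewed in `K[[x - λᵢ]]` (with `c = λᵢ`). -/
def A00P1 (K : Type*) [Field K] (c s1 s2 : K) : K⟦X⟧ :=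
  (PowerSeries.C (R := K) (-(s1 ^ 2 * s2 ^ 2)) +
    PowerSeries.C (R := K) (-(s1 ^ 3 * s2) + 8 * s1 * s2 ^ 2) * xAt K c +
    PowerSeries.C (R := K) (2 * s1 ^ 4 - 9 * s1 ^ 2 * s2) * xAt K c ^ 2) *
  (PowerSeries.C (R := K) 4 * (xAt K c * PowerSeries.C (R := K) s1 - PowerSeries.C (R := K) (2 * s2)) ^ 4)⁻¹

/-- `A₀₁(x) = (2s₁s₂² + (-s₁²s₂ - 8s₂²)x + (-s₁³ + 10s₁s₂)x² - s₁²x³) / (2(xs₁ - 2s₂)³)`. -/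
def A01P1 (K : Type*) [Field K] (c s1 s2 : K) : K⟦X⟧ :=
  (PowerSeries.C (R := K) (2 * s1 * s2 ^ 2) +
    PowerSeries.C (R := K) (-(s1 ^ 2 * s2) - 8 * s2 ^ 2) * xAt K c +
    PowerSeries.C (R := K) (-s1 ^ 3 + 10 * s1 * s2) * xAt K c ^ 2 -
    PowerSeries.C (R := K) (s1 ^ 2) * xAt K c ^ 3) *
  (PowerSeries.C (R := K) 2 * (xAt K c * PowerSeries.C (R := K) s1 - PowerSeries.C (R := K) (2 * s2)) ^ 3)⁻¹

/-- `A₀₂(x) = (s₂² - 2s₁s₂x + (s₁² + s₂)x² - s₁x³) / ((xs₁ - 2s₂)²)`. -/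
def A02P1 (K : Type*) [Field K] (c s1 s2 : K) : K⟦X⟧ :=
  (PowerSeries.C (R := K) (s2 ^ 2) -
    PowerSeries.C (R := K) (2 * (s1 * s2)) * xAt K c +
    PowerSeries.C (R := K) (s1 ^ 2 + s2) * xAt K c ^ 2 -
    PowerSeries.C (R := K) s1 * xAt K c ^ 3) *
  ((xAt K c * PowerSeries.C (R := K) s1 - PowerSeries.C (R := K) (2 * s2)) ^ 2)⁻¹

/-- **Admissibility of the local `ℙ¹` differential system.**
Let `K` be a field of characteristic zero, `λ₀, λ₁ ∈ K` nonzero with `λ₀ ≠ λ₁` and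
`s₁ = λ₀ + λ₁ ≠ 0`, `s₂ = λ₀λ₁`, `f(x) = s₁x - 2s₂`.  Since `f(λᵢ) ≠ 0`, the ring
`K[x][f⁻¹]` embeds into `K[[x - λᵢ]]`, modelled as `K[[X]]` with `x = λᵢ + X`.  Then for
any sequence `(Φ_p)` in `K[[x - λᵢ]]` with `Φ₀ = 1` satisfying, for all `p ≥ 1`,
`dΦ_p/dx = A₀₀Φ_{p-1} + A₀₁ dΦ_{p-1}/dx + A₀₂ d²Φ_{p-1}/dx²`, every `Φ_p` lies in the
subring `K[x][(s₁x - 2s₂)⁻¹]` of `K[[x - λᵢ]]`. -/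
theorem admissible_system_localP1
    (K : Type*) [Field K] [CharZero K]
    (lam : Fin 2 → K) (hnz : ∀ j, lam j ≠ 0) (hne : lam 0 ≠ lam 1) (i : Fin 2)
    (s1 s2 : K) (hs1 : s1 = lam 0 + lam 1) (hs2 : s2 = lam 0 * lam 1) (hs1ne : s1 ≠ 0)
    (Φ : ℕ → K⟦X⟧) (hΦ0 : Φ 0 = 1)
    (hrec : ∀ p : ℕ,
      PowerSeries.derivative K (Φ (p + 1)) =
        A00P1 K (lam i) s1 s2 * Φ p +
        A01P1 K (lam i) s1 s2 * PowerSeries.derivative K (Φ p) +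
        A02P1 K (lam i) s1 s2 *
          PowerSeries.derivative K (PowerSeries.derivative K (Φ p))) :
    ∀ p : ℕ, Φ p ∈
      Algebra.adjoin K
        {xAt K (lam i),
          (PowerSeries.C (R := K) s1 * xAt K (lam i) - PowerSeries.C (R := K) (2 * s2))⁻¹} := by
  classical
  set u : K⟦X⟧ := PowerSeries.C (R := K) s1 * xAt K (lam i) - PowerSeries.C (R := K) (2 * s2) with hu
  set v : K⟦X⟧ := u⁻¹ with hv
  have hxu : xAt K (lam i) * PowerSeries.C (R := K) s1 - PowerSeries.C (R := K) (2 * s2) = u := by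
    rw [hu]; ring
  have hcc : PowerSeries.constantCoeff (R := K) u = s1 * lam i - 2 * s2 := by
    rw [hu]; simp [xAt]
  have hne' : lam 1 ≠ lam 0 := fun h => hne h.symm
  have hu0 : PowerSeries.constantCoeff (R := K) u ≠ 0 := by
    rw [hcc, hs1, hs2]
    fin_cases i
    · show (lam 0 + lam 1) * lam 0 - 2 * (lam 0 * lam 1) ≠ 0
      intro h0
      exact mul_ne_zero (hnz 0) (sub_ne_zero.mpr hne) (by linear_combination h0)
    · show (lam 0 + lam 1) * lam 1 - 2 * (lam 0 * lam 1) ≠ 0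
      intro h0
      exact mul_ne_zero (hnz 1) (sub_ne_zero.mpr hne') (by linear_combination h0)
  have huv : u * v = 1 := by rw [hv]; exact PowerSeries.mul_inv_cancel _ hu0
  -- uniqueness of inverses
  have hinv : ∀ a b : K⟦X⟧, a * b = 1 → a⁻¹ = b := by
    intro a b hab
    have ha : PowerSeries.constantCoeff (R := K) a ≠ 0 := by
      intro h
      have h1 := congrArg (PowerSeries.constantCoeff (R := K)) hab
      rw [map_mul, h, zero_mul, map_one] at h1
      exact zero_ne_one h1
    calc a⁻¹ = a⁻¹ * (a * b) := by rw [hab, mul_one]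
      _ = (a⁻¹ * a) * b := by ring
      _ = b := by rw [PowerSeries.inv_mul_cancel _ ha, one_mul]
  -- derivatives
  have hDx : PowerSeries.derivative K (xAt K (lam i)) = 1 := by
    simp [xAt]
  have hDu : PowerSeries.derivative K u = PowerSeries.C (R := K) s1 := by
    rw [hu, Derivation.map_sub, Derivation.leibniz, hDx, PowerSeries.derivative_C,
      PowerSeries.derivative_C]
    simp
  have hDv : PowerSeries.derivative K v = -(PowerSeries.C (R := K) s1) * v ^ 2 := by
    rw [hv, PowerSeries.derivative_inv', hDu]
    ring
  have hDvn : ∀ n : ℕ, PowerSeries.derivative K (v ^ n)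
      = PowerSeries.C (R := K) (-(n : K) * s1) * v ^ (n + 1) := by
    intro n
    induction n with
    | zero => simp
    | succ m ih =>
      rw [pow_succ, Derivation.leibniz, ih, hDv]
      simp only [smul_eq_mul, Nat.cast_succ, map_mul, map_neg, map_add, map_one, map_natCast]
      ring
  have hDCv : ∀ (e : K) (k : ℕ),
      PowerSeries.derivative K (PowerSeries.C (R := K) e * v ^ k)
        = PowerSeries.C (R := K) (e * (-(k : K) * s1)) * v ^ (k + 1) := by
    intro e k
    rw [Derivation.leibniz, hDvn, PowerSeries.derivative_C]
    simp only [smul_eq_mul, smul_zero, map_mul, map_neg, map_natCast, mul_zero, add_zero]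
    ring
  -- inverses of the denominators
  have h4K : (PowerSeries.C (R := K) 4) * PowerSeries.C (R := K) (4 : K)⁻¹ = 1 := by
    rw [← map_mul, mul_inv_cancel₀ (by norm_num : (4 : K) ≠ 0), map_one]
  have h2K : (PowerSeries.C (R := K) 2) * PowerSeries.C (R := K) (2 : K)⁻¹ = 1 := by
    rw [← map_mul, mul_inv_cancel₀ (by norm_num : (2 : K) ≠ 0), map_one]
  have hs1K : PowerSeries.C (R := K) s1⁻¹ * PowerSeries.C (R := K) s1 = 1 := by
    rw [← map_mul, inv_mul_cancel₀ hs1ne, map_one]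
  have h4inv : (PowerSeries.C (R := K) 4 * u ^ 4)⁻¹ = PowerSeries.C (R := K) (4 : K)⁻¹ * v ^ 4 :=
    hinv _ _ (by
      linear_combination (PowerSeries.C (R := K) 4 * PowerSeries.C (R := K) (4 : K)⁻¹ *
        ((u * v) ^ 3 + (u * v) ^ 2 + u * v + 1)) * huv + h4K)
  have h2inv : (PowerSeries.C (R := K) 2 * u ^ 3)⁻¹ = PowerSeries.C (R := K) (2 : K)⁻¹ * v ^ 3 :=
    hinv _ _ (by
      linear_combination (PowerSeries.C (R := K) 2 * PowerSeries.C (R := K) (2 : K)⁻¹ *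
        ((u * v) ^ 2 + u * v + 1)) * huv + h2K)
  have hsqinv : ((u : K⟦X⟧) ^ 2)⁻¹ = v ^ 2 :=
    hinv _ _ (by linear_combination (u * v + 1) * huv)
  -- Laurent forms of the numerators
  have hN00 : (PowerSeries.C (R := K) (-(s1 ^ 2 * s2 ^ 2)) +
      PowerSeries.C (R := K) (-(s1 ^ 3 * s2) + 8 * s1 * s2 ^ 2) * xAt K (lam i) +
      PowerSeries.C (R := K) (2 * s1 ^ 4 - 9 * s1 ^ 2 * s2) * xAt K (lam i) ^ 2)
      = PowerSeries.C (R := K) (2 * s1 ^ 2 - 9 * s2) * u ^ 2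
        + PowerSeries.C (R := K) (7 * s2 * (s1 ^ 2 - 4 * s2)) * u
        + PowerSeries.C (R := K) (5 * s2 ^ 2 * (s1 ^ 2 - 4 * s2)) := by
    rw [hu]
    simp only [map_sub, map_add, map_mul, map_neg, map_pow, map_ofNat]
    ring
  have hN01 : PowerSeries.C (R := K) s1 * (PowerSeries.C (R := K) (2 * s1 * s2 ^ 2) +
      PowerSeries.C (R := K) (-(s1 ^ 2 * s2) - 8 * s2 ^ 2) * xAt K (lam i) +
      PowerSeries.C (R := K) (-s1 ^ 3 + 10 * s1 * s2) * xAt K (lam i) ^ 2 -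
      PowerSeries.C (R := K) (s1 ^ 2) * xAt K (lam i) ^ 3)
      = -u ^ 3 - PowerSeries.C (R := K) (s1 ^ 2 - 4 * s2) * u ^ 2
        - PowerSeries.C (R := K) (5 * s2 * (s1 ^ 2 - 4 * s2)) * u
        - PowerSeries.C (R := K) (4 * s2 ^ 2 * (s1 ^ 2 - 4 * s2)) := by
    rw [hu]
    simp only [map_sub, map_add, map_mul, map_neg, map_pow, map_ofNat]
    ring
  have hN02 : PowerSeries.C (R := K) s1 * (PowerSeries.C (R := K) s1 * (PowerSeries.C (R := K) (s2 ^ 2) -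
      PowerSeries.C (R := K) (2 * (s1 * s2)) * xAt K (lam i) +
      PowerSeries.C (R := K) (s1 ^ 2 + s2) * xAt K (lam i) ^ 2 -
      PowerSeries.C (R := K) s1 * xAt K (lam i) ^ 3))
      = -u ^ 3 + PowerSeries.C (R := K) (s1 ^ 2 - 5 * s2) * u ^ 2
        + PowerSeries.C (R := K) (2 * s2 * (s1 ^ 2 - 4 * s2)) * u
        + PowerSeries.C (R := K) (s2 ^ 2 * (s1 ^ 2 - 4 * s2)) := by
    rw [hu]
    simp only [map_sub, map_add, map_mul, map_neg, map_pow, map_ofNat]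
    ring
  -- Laurent forms of the coefficients of the system
  have hA00 : A00P1 K (lam i) s1 s2
      = PowerSeries.C (R := K) (4 : K)⁻¹ * (PowerSeries.C (R := K) (2 * s1 ^ 2 - 9 * s2) * v ^ 2
        + PowerSeries.C (R := K) (7 * s2 * (s1 ^ 2 - 4 * s2)) * v ^ 3
        + PowerSeries.C (R := K) (5 * s2 ^ 2 * (s1 ^ 2 - 4 * s2)) * v ^ 4) := by
    simp only [A00P1]
    rw [hxu, h4inv, hN00]
    linear_combination (PowerSeries.C (R := K) (4 : K)⁻¹ *
      (PowerSeries.C (R := K) (2 * s1 ^ 2 - 9 * s2) * v ^ 2 * (u * v + 1)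
       + PowerSeries.C (R := K) (7 * s2 * (s1 ^ 2 - 4 * s2)) * v ^ 3)) * huv
  have hA01 : A01P1 K (lam i) s1 s2
      = PowerSeries.C (R := K) (2 : K)⁻¹ * PowerSeries.C (R := K) s1⁻¹ *
        (-1 - PowerSeries.C (R := K) (s1 ^ 2 - 4 * s2) * v
          - PowerSeries.C (R := K) (5 * s2 * (s1 ^ 2 - 4 * s2)) * v ^ 2
          - PowerSeries.C (R := K) (4 * s2 ^ 2 * (s1 ^ 2 - 4 * s2)) * v ^ 3) := by
    simp only [A01P1]
    rw [hxu, h2inv]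
    have hNum : (PowerSeries.C (R := K) (2 * s1 * s2 ^ 2) +
        PowerSeries.C (R := K) (-(s1 ^ 2 * s2) - 8 * s2 ^ 2) * xAt K (lam i) +
        PowerSeries.C (R := K) (-s1 ^ 3 + 10 * s1 * s2) * xAt K (lam i) ^ 2 -
        PowerSeries.C (R := K) (s1 ^ 2) * xAt K (lam i) ^ 3)
        = PowerSeries.C (R := K) s1⁻¹ *
          (-u ^ 3 - PowerSeries.C (R := K) (s1 ^ 2 - 4 * s2) * u ^ 2
            - PowerSeries.C (R := K) (5 * s2 * (s1 ^ 2 - 4 * s2)) * u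
            - PowerSeries.C (R := K) (4 * s2 ^ 2 * (s1 ^ 2 - 4 * s2))) := by
      calc (PowerSeries.C (R := K) (2 * s1 * s2 ^ 2) +
          PowerSeries.C (R := K) (-(s1 ^ 2 * s2) - 8 * s2 ^ 2) * xAt K (lam i) +
          PowerSeries.C (R := K) (-s1 ^ 3 + 10 * s1 * s2) * xAt K (lam i) ^ 2 -
          PowerSeries.C (R := K) (s1 ^ 2) * xAt K (lam i) ^ 3)
          = PowerSeries.C (R := K) s1⁻¹ * (PowerSeries.C (R := K) s1 *
            (PowerSeries.C (R := K) (2 * s1 * s2 ^ 2) +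
            PowerSeries.C (R := K) (-(s1 ^ 2 * s2) - 8 * s2 ^ 2) * xAt K (lam i) +
            PowerSeries.C (R := K) (-s1 ^ 3 + 10 * s1 * s2) * xAt K (lam i) ^ 2 -
            PowerSeries.C (R := K) (s1 ^ 2) * xAt K (lam i) ^ 3)) := by
            rw [← mul_assoc, hs1K, one_mul]
        _ = _ := by rw [hN01]
    rw [hNum]
    linear_combination (PowerSeries.C (R := K) s1⁻¹ * PowerSeries.C (R := K) (2 : K)⁻¹ *
      (-((u * v) ^ 2 + u * v + 1)
        - PowerSeries.C (R := K) (s1 ^ 2 - 4 * s2) * v * (u * v + 1)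
        - PowerSeries.C (R := K) (5 * s2 * (s1 ^ 2 - 4 * s2)) * v ^ 2)) * huv
  have hA02 : A02P1 K (lam i) s1 s2
      = PowerSeries.C (R := K) s1⁻¹ * PowerSeries.C (R := K) s1⁻¹ *
        (-u + PowerSeries.C (R := K) (s1 ^ 2 - 5 * s2)
          + PowerSeries.C (R := K) (2 * s2 * (s1 ^ 2 - 4 * s2)) * v
          + PowerSeries.C (R := K) (s2 ^ 2 * (s1 ^ 2 - 4 * s2)) * v ^ 2) := by
    simp only [A02P1]
    rw [hxu, hsqinv]
    have hNum : (PowerSeries.C (R := K) (s2 ^ 2) -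
        PowerSeries.C (R := K) (2 * (s1 * s2)) * xAt K (lam i) +
        PowerSeries.C (R := K) (s1 ^ 2 + s2) * xAt K (lam i) ^ 2 -
        PowerSeries.C (R := K) s1 * xAt K (lam i) ^ 3)
        = PowerSeries.C (R := K) s1⁻¹ * (PowerSeries.C (R := K) s1⁻¹ *
          (-u ^ 3 + PowerSeries.C (R := K) (s1 ^ 2 - 5 * s2) * u ^ 2
            + PowerSeries.C (R := K) (2 * s2 * (s1 ^ 2 - 4 * s2)) * u
            + PowerSeries.C (R := K) (s2 ^ 2 * (s1 ^ 2 - 4 * s2)))) := by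
      calc (PowerSeries.C (R := K) (s2 ^ 2) -
          PowerSeries.C (R := K) (2 * (s1 * s2)) * xAt K (lam i) +
          PowerSeries.C (R := K) (s1 ^ 2 + s2) * xAt K (lam i) ^ 2 -
          PowerSeries.C (R := K) s1 * xAt K (lam i) ^ 3)
          = PowerSeries.C (R := K) s1⁻¹ * (PowerSeries.C (R := K) s1⁻¹ * (PowerSeries.C (R := K) s1 *
            (PowerSeries.C (R := K) s1 * (PowerSeries.C (R := K) (s2 ^ 2) -
            PowerSeries.C (R := K) (2 * (s1 * s2)) * xAt K (lam i) +
            PowerSeries.C (R := K) (s1 ^ 2 + s2) * xAt K (lam i) ^ 2 -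
            PowerSeries.C (R := K) s1 * xAt K (lam i) ^ 3)))) := by
            rw [show ∀ a b c d e : K⟦X⟧, a * (b * (c * (d * e))) = (a * c) * ((b * d) * e)
              from fun a b c d e => by ring, hs1K, one_mul, one_mul]
        _ = _ := by rw [hN02]
    rw [hNum]
    linear_combination (PowerSeries.C (R := K) s1⁻¹ * PowerSeries.C (R := K) s1⁻¹ *
      ((-u + PowerSeries.C (R := K) (s1 ^ 2 - 5 * s2)) * (u * v + 1)
        + PowerSeries.C (R := K) (2 * s2 * (s1 ^ 2 - 4 * s2)) * v)) * huv
  -- the submodule of Laurent tails of order ≤ -2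
  set W : Submodule K K⟦X⟧ := Submodule.span K (Set.range fun m : ℕ => v ^ (m + 2))
    with hW
  have hmemW : ∀ m : ℕ, v ^ (m + 2) ∈ W := by
    intro m; rw [hW]; exact Submodule.subset_span ⟨m, rfl⟩
  have hCW : ∀ (b : K) (w : K⟦X⟧), w ∈ W → PowerSeries.C (R := K) b * w ∈ W := by
    intro b w hw
    rw [← PowerSeries.smul_eq_C_mul]
    exact W.smul_mem b hw
  have hA00W : ∀ k : ℕ, A00P1 K (lam i) s1 s2 * v ^ k ∈ W := by
    intro k
    have he : A00P1 K (lam i) s1 s2 * v ^ k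
        = PowerSeries.C (R := K) (4 : K)⁻¹ * (PowerSeries.C (R := K) (2 * s1 ^ 2 - 9 * s2) * v ^ (k + 2))
          + PowerSeries.C (R := K) (4 : K)⁻¹ *
            (PowerSeries.C (R := K) (7 * s2 * (s1 ^ 2 - 4 * s2)) * v ^ (k + 3))
          + PowerSeries.C (R := K) (4 : K)⁻¹ *
            (PowerSeries.C (R := K) (5 * s2 ^ 2 * (s1 ^ 2 - 4 * s2)) * v ^ (k + 4)) := by
      rw [hA00]; ring
    rw [he]
    exact W.add_mem (W.add_mem (hCW _ _ (hCW _ _ (hmemW k)))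
      (hCW _ _ (hCW _ _ (hmemW (k + 1))))) (hCW _ _ (hCW _ _ (hmemW (k + 2))))
  have hA01W : ∀ k : ℕ, A01P1 K (lam i) s1 s2 * v ^ (k + 2) ∈ W := by
    intro k
    have he : A01P1 K (lam i) s1 s2 * v ^ (k + 2)
        = -(PowerSeries.C (R := K) (2 : K)⁻¹ * (PowerSeries.C (R := K) s1⁻¹ * v ^ (k + 2)))
          - PowerSeries.C (R := K) (2 : K)⁻¹ * (PowerSeries.C (R := K) s1⁻¹ *
            (PowerSeries.C (R := K) (s1 ^ 2 - 4 * s2) * v ^ (k + 3)))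
          - PowerSeries.C (R := K) (2 : K)⁻¹ * (PowerSeries.C (R := K) s1⁻¹ *
            (PowerSeries.C (R := K) (5 * s2 * (s1 ^ 2 - 4 * s2)) * v ^ (k + 4)))
          - PowerSeries.C (R := K) (2 : K)⁻¹ * (PowerSeries.C (R := K) s1⁻¹ *
            (PowerSeries.C (R := K) (4 * s2 ^ 2 * (s1 ^ 2 - 4 * s2)) * v ^ (k + 5))) := by
      rw [hA01]; ring
    rw [he]
    exact W.sub_mem (W.sub_mem (W.sub_mem
      (W.neg_mem (hCW _ _ (hCW _ _ (hmemW k))))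
      (hCW _ _ (hCW _ _ (hCW _ _ (hmemW (k + 1))))))
      (hCW _ _ (hCW _ _ (hCW _ _ (hmemW (k + 2))))))
      (hCW _ _ (hCW _ _ (hCW _ _ (hmemW (k + 3)))))
  have hA02W : ∀ k : ℕ, A02P1 K (lam i) s1 s2 * v ^ (k + 3) ∈ W := by
    intro k
    have he : A02P1 K (lam i) s1 s2 * v ^ (k + 3)
        = -(PowerSeries.C (R := K) s1⁻¹ * (PowerSeries.C (R := K) s1⁻¹ * v ^ (k + 2)))
          + PowerSeries.C (R := K) s1⁻¹ * (PowerSeries.C (R := K) s1⁻¹ *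
            (PowerSeries.C (R := K) (s1 ^ 2 - 5 * s2) * v ^ (k + 3)))
          + PowerSeries.C (R := K) s1⁻¹ * (PowerSeries.C (R := K) s1⁻¹ *
            (PowerSeries.C (R := K) (2 * s2 * (s1 ^ 2 - 4 * s2)) * v ^ (k + 4)))
          + PowerSeries.C (R := K) s1⁻¹ * (PowerSeries.C (R := K) s1⁻¹ *
            (PowerSeries.C (R := K) (s2 ^ 2 * (s1 ^ 2 - 4 * s2)) * v ^ (k + 5))) := by
      rw [hA02]
      linear_combination (-(PowerSeries.C (R := K) s1⁻¹ * PowerSeries.C (R := K) s1⁻¹ * v ^ (k + 2))) * huv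
    rw [he]
    exact W.add_mem (W.add_mem (W.add_mem
      (W.neg_mem (hCW _ _ (hCW _ _ (hmemW k))))
      (hCW _ _ (hCW _ _ (hCW _ _ (hmemW (k + 1))))))
      (hCW _ _ (hCW _ _ (hCW _ _ (hmemW (k + 2))))))
      (hCW _ _ (hCW _ _ (hCW _ _ (hmemW (k + 3)))))
  have hswap : ∀ (b : K) (g : K⟦X⟧) (k : ℕ),
      g * (PowerSeries.C (R := K) b * v ^ k) = PowerSeries.C (R := K) b * (g * v ^ k) := by
    intro b g k; ring
  have hstep : ∀ (n : ℕ) (a : K),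
      A00P1 K (lam i) s1 s2 * (PowerSeries.C (R := K) a * v ^ n)
      + A01P1 K (lam i) s1 s2 *
          PowerSeries.derivative K (PowerSeries.C (R := K) a * v ^ n)
      + A02P1 K (lam i) s1 s2 *
          PowerSeries.derivative K
            (PowerSeries.derivative K (PowerSeries.C (R := K) a * v ^ n)) ∈ W := by
    intro n a
    rw [hDCv, hDCv]
    simp only [hswap]
    cases n with
    | zero =>
      simp only [Nat.cast_zero, neg_zero, zero_mul, mul_zero, map_zero, add_zero]
      exact hCW _ _ (hA00W 0)
    | succ m =>
      exact W.add_mem (W.add_mem (hCW _ _ (hA00W (m + 1))) (hCW _ _ (hA01W m)))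
        (hCW _ _ (hA02W m))
  have hL1 : ∀ q : Polynomial K,
      A00P1 K (lam i) s1 s2 * Polynomial.aeval v q
      + A01P1 K (lam i) s1 s2 * PowerSeries.derivative K (Polynomial.aeval v q)
      + A02P1 K (lam i) s1 s2 *
          PowerSeries.derivative K (PowerSeries.derivative K (Polynomial.aeval v q)) ∈ W := by
    intro q
    induction q using Polynomial.induction_on' with
    | add p q hp hq =>
      simp only [map_add]
      have he : A00P1 K (lam i) s1 s2 * (Polynomial.aeval v p + Polynomial.aeval v q)
          + A01P1 K (lam i) s1 s2 *
            (PowerSeries.derivative K (Polynomial.aeval v p)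
              + PowerSeries.derivative K (Polynomial.aeval v q))
          + A02P1 K (lam i) s1 s2 *
            (PowerSeries.derivative K (PowerSeries.derivative K (Polynomial.aeval v p))
              + PowerSeries.derivative K (PowerSeries.derivative K (Polynomial.aeval v q)))
          = (A00P1 K (lam i) s1 s2 * Polynomial.aeval v p
            + A01P1 K (lam i) s1 s2 * PowerSeries.derivative K (Polynomial.aeval v p)
            + A02P1 K (lam i) s1 s2 *
                PowerSeries.derivative K (PowerSeries.derivative K (Polynomial.aeval v p)))
          + (A00P1 K (lam i) s1 s2 * Polynomial.aeval v q
            + A01P1 K (lam i) s1 s2 * PowerSeries.derivative K (Polynomial.aeval v q)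
            + A02P1 K (lam i) s1 s2 *
                PowerSeries.derivative K (PowerSeries.derivative K (Polynomial.aeval v q))) := by
        ring
      rw [he]
      exact W.add_mem hp hq
    | monomial n a =>
      rw [Polynomial.aeval_monomial, ← PowerSeries.C_eq_algebraMap]
      exact hstep n a
  have hL2 : ∀ w ∈ W, ∃ r : Polynomial K,
      PowerSeries.derivative K (Polynomial.aeval v r) = w := by
    intro w hw
    rw [hW] at hw
    induction hw using Submodule.span_induction with
    | mem x hx =>
      obtain ⟨m, rfl⟩ := hx
      refine ⟨Polynomial.C (-((m + 1 : ℕ) : K) * s1)⁻¹ * Polynomial.X ^ (m + 1), ?_⟩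
      have hcast : (-((m + 1 : ℕ) : K) * s1) ≠ 0 :=
        mul_ne_zero (neg_ne_zero.mpr (Nat.cast_ne_zero.mpr (Nat.succ_ne_zero m))) hs1ne
      rw [map_mul, Polynomial.aeval_C, map_pow, Polynomial.aeval_X,
        ← PowerSeries.C_eq_algebraMap, hDCv, inv_mul_cancel₀ hcast, map_one, one_mul]
    | zero => exact ⟨0, by simp⟩
    | add x y hx hy ihx ihy =>
      obtain ⟨r1, h1⟩ := ihx
      obtain ⟨r2, h2⟩ := ihy
      exact ⟨r1 + r2, by rw [map_add, map_add, h1, h2]⟩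
    | smul a x hx ih =>
      obtain ⟨r, hr⟩ := ih
      exact ⟨a • r, by rw [map_smul, Derivation.map_smul, hr]⟩
  have key : ∀ p : ℕ, ∃ q : Polynomial K, Φ p = Polynomial.aeval v q := by
    intro p
    induction p with
    | zero => exact ⟨1, by rw [hΦ0, map_one]⟩
    | succ p ih =>
      obtain ⟨q, hq⟩ := ih
      have hmem : A00P1 K (lam i) s1 s2 * Φ p
          + A01P1 K (lam i) s1 s2 * PowerSeries.derivative K (Φ p)
          + A02P1 K (lam i) s1 s2 *
              PowerSeries.derivative K (PowerSeries.derivative K (Φ p)) ∈ W := by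
        rw [hq]; exact hL1 q
      obtain ⟨r, hr⟩ := hL2 _ hmem
      refine ⟨r + Polynomial.C (PowerSeries.constantCoeff (R := K) (Φ (p + 1))
        - PowerSeries.constantCoeff (R := K) (Polynomial.aeval v r)), ?_⟩
      have haev : Polynomial.aeval v (r + Polynomial.C (PowerSeries.constantCoeff (R := K) (Φ (p + 1))
          - PowerSeries.constantCoeff (R := K) (Polynomial.aeval v r)))
          = Polynomial.aeval v r + PowerSeries.C (R := K) (PowerSeries.constantCoeff (R := K) (Φ (p + 1))
            - PowerSeries.constantCoeff (R := K) (Polynomial.aeval v r)) := by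
        rw [map_add, Polynomial.aeval_C, ← PowerSeries.C_eq_algebraMap]
      rw [haev]
      apply PowerSeries.derivative.ext
      · rw [map_add, PowerSeries.derivative_C, add_zero, hr]
        exact hrec p
      · rw [map_add, PowerSeries.constantCoeff_C]
        ring
  intro p
  obtain ⟨q, hq⟩ := key p
  rw [hq]
  exact Algebra.adjoin_mono
    (by
      intro z hz
      rw [Set.mem_singleton_iff] at hz
      rw [hz]
      exact Set.mem_insert_iff.mpr (Or.inr rfl))
    (Polynomial.aeval_mem_adjoin_singleton K v)

end
end
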